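/- Let P := {x ∈ ℝⁿ | ∃ y ∈ ℝᵖ, Ax + By ≤ c}, let e_1,…,e_k ∈ P be linearly independent, and suppose span(P) has dimension at least k+1. Then there exist x ≠ 0, x⁺, x⁻ ∈ ℝⁿ, y⁺, y⁻ ∈ ℝᵖ, and scalars λ⁺, λ⁻ ≥ 0 such that e_i^T x = 0 for all i = 1,…,k, x = x⁺ − x⁻, Ax⁺ + By⁺ ≤ λ⁺ c, and Ax⁻ + By⁻ ≤ λ⁻ c. -/

import Mathlib

theorem feasible_system_of_span_dim_ge (n p m k : ℕ)
    (A : Matrix (Fin m) (Fin n) ℝ) (B : Matrix (Fin m) (Fin p) ℝ) (c : Fin m → ℝ)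
    (P : Set (Fin n → ℝ))
    (hP : P = {x | ∃ y : Fin p → ℝ, A.mulVec x + B.mulVec y ≤ c})
    (e : Fin k → (Fin n → ℝ)) (heP : ∀ i, e i ∈ P) (hind : LinearIndependent ℝ e)
    (hdim : k + 1 ≤ Module.finrank ℝ (Submodule.span ℝ P)) :
    ∃ (x xp xm : Fin n → ℝ) (yp ym : Fin p → ℝ) (lp lm : ℝ),
      x ≠ 0 ∧ 0 ≤ lp ∧ 0 ≤ lm ∧ (∀ i, dotProduct (e i) x = 0) ∧ x = xp - xm ∧
      A.mulVec xp + B.mulVec yp ≤ lp • c ∧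
      A.mulVec xm + B.mulVec ym ≤ lm • c := by
  -- Step 1: every element of span P decomposes
  have decomp : ∀ x ∈ Submodule.span ℝ P,
      ∃ (xp xm : Fin n → ℝ) (yp ym : Fin p → ℝ) (lp lm : ℝ),
        0 ≤ lp ∧ 0 ≤ lm ∧ x = xp - xm ∧
        A.mulVec xp + B.mulVec yp ≤ lp • c ∧
        A.mulVec xm + B.mulVec ym ≤ lm • c := by
    intro x hx
    induction hx using Submodule.span_induction with
    | mem v hv =>
      rw [hP] at hv
      obtain ⟨y, hy⟩ := hv
      exact ⟨v, 0, y, 0, 1, 0, zero_le_one, le_refl 0, by simp, by simpa using hy,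
        by simp [Matrix.mulVec_zero]⟩
    | zero =>
      exact ⟨0, 0, 0, 0, 0, 0, le_refl 0, le_refl 0, by simp,
        by simp [Matrix.mulVec_zero], by simp [Matrix.mulVec_zero]⟩
    | add u v hu hv ihu ihv =>
      obtain ⟨xp1, xm1, yp1, ym1, lp1, lm1, h1, h2, h3, h4, h5⟩ := ihu
      obtain ⟨xp2, xm2, yp2, ym2, lp2, lm2, g1, g2, g3, g4, g5⟩ := ihv
      refine ⟨xp1 + xp2, xm1 + xm2, yp1 + yp2, ym1 + ym2, lp1 + lp2, lm1 + lm2,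
        by linarith, by linarith, ?_, ?_, ?_⟩
      · rw [h3, g3]; abel
      · intro i
        have h := add_le_add (h4 i) (g4 i)
        simp only [Matrix.mulVec_add, Pi.add_apply, Pi.smul_apply, smul_eq_mul] at h ⊢
        nlinarith [h]
      · intro i
        have h := add_le_add (h5 i) (g5 i)
        simp only [Matrix.mulVec_add, Pi.add_apply, Pi.smul_apply, smul_eq_mul] at h ⊢
        nlinarith [h]
    | smul a v hv ih =>
      obtain ⟨xp, xm, yp, ym, lp, lm, h1, h2, h3, h4, h5⟩ := ih
      rcases le_or_gt 0 a with ha | ha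
      · refine ⟨a • xp, a • xm, a • yp, a • ym, a * lp, a * lm,
          mul_nonneg ha h1, mul_nonneg ha h2, ?_, ?_, ?_⟩
        · rw [h3, smul_sub]
        · intro i
          have h := mul_le_mul_of_nonneg_left (h4 i) ha
          simp only [Matrix.mulVec_smul, Pi.add_apply, Pi.smul_apply, smul_eq_mul] at h ⊢
          nlinarith [h]
        · intro i
          have h := mul_le_mul_of_nonneg_left (h5 i) ha
          simp only [Matrix.mulVec_smul, Pi.add_apply, Pi.smul_apply, smul_eq_mul] at h ⊢
          nlinarith [h]
      · refine ⟨(-a) • xm, (-a) • xp, (-a) • ym, (-a) • yp, (-a) * lm, (-a) * lp,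
          mul_nonneg (by linarith) h2, mul_nonneg (by linarith) h1, ?_, ?_, ?_⟩
        · rw [h3]; ext j; simp [smul_sub]; ring
        · intro i
          have h := mul_le_mul_of_nonneg_left (h5 i) (by linarith : (0:ℝ) ≤ -a)
          simp only [Matrix.mulVec_smul, Pi.add_apply, Pi.smul_apply, smul_eq_mul] at h ⊢
          nlinarith [h]
        · intro i
          have h := mul_le_mul_of_nonneg_left (h4 i) (by linarith : (0:ℝ) ≤ -a)
          simp only [Matrix.mulVec_smul, Pi.add_apply, Pi.smul_apply, smul_eq_mul] at h ⊢
          nlinarith [h]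
  -- Step 2: find nonzero x in span P orthogonal to all e i
  set W := Submodule.span ℝ P with hW
  let f : (Fin n → ℝ) →ₗ[ℝ] (Fin k → ℝ) :=
    { toFun := fun v i => dotProduct (e i) v
      map_add' := by intro u v; ext i; simp [dotProduct_add]
      map_smul' := by intro a v; ext i; simp [dotProduct_smul] }
  let g : W →ₗ[ℝ] (Fin k → ℝ) := f.comp W.subtype
  have hker : LinearMap.ker g ≠ ⊥ := by
    intro hbot
    have hinj : Function.Injective g := LinearMap.ker_eq_bot.mp hbot
    have : Module.finrank ℝ W ≤ Module.finrank ℝ (Fin k → ℝ) :=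
      LinearMap.finrank_le_finrank_of_injective hinj
    rw [Module.finrank_pi] at this
    simp at this
    omega
  obtain ⟨⟨x, hxW⟩, hxker, hxne⟩ := Submodule.exists_mem_ne_zero_of_ne_bot hker
  obtain ⟨xp, xm, yp, ym, lp, lm, h1, h2, h3, h4, h5⟩ := decomp x hxW
  refine ⟨x, xp, xm, yp, ym, lp, lm, ?_, h1, h2, ?_, h3, h4, h5⟩
  · intro hx0
    apply hxne
    exact Subtype.ext hx0
  · intro i
    have := LinearMap.mem_ker.mp hxker
    have := congrFun this i
    simpa [g, f] using this
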